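/- Fix n ≥ 3 and let ℓ_{ξ,v} = {(v′ − t²ξ′, arctan(v_{n−1}/t) − tξ_{n−1}, t) : |t − 1| ≤ 1/10} be the φ_{n,tan}-curves, with base point p₀ = (0,0,1). Then the family of φ_{n,tan}-curves is not diffeomorphic to a family of lines: for every ε₀ > 0 there do not exist a smooth diffeomorphism F from B_{ε₀}(p₀) ⊂ ℝⁿ onto its image, maps Ξ, V : ℝ^{n−1} × ℝ^{n−1} → ℝ^{n−1}, and a neighborhood U of (0,0), such that F(ℓ_{ξ,v} ∩ B_{ε₀}(p₀)) ⊆ line_{Ξ(ξ,v), V(ξ,v)} for every (ξ,v) ∈ U. -/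

import Mathlib

open Metric Set Topology MeasureTheory

noncomputable section

/-- ξ-gradient ∇_ξφ(x,ξ). -/
def gradXi (n : ℕ) (φ : (Fin n → ℝ) → (Fin (n-1) → ℝ) → ℝ)
    (x : Fin n → ℝ) (ξ : Fin (n-1) → ℝ) : Fin (n-1) → ℝ :=
  fun j => fderiv ℝ (φ x) ξ (Pi.single j (1:ℝ))

/-- ξ-Hessian ∇_ξ²φ(x,ξ). -/
def hessXi (n : ℕ) (φ : (Fin n → ℝ) → (Fin (n-1) → ℝ) → ℝ)
    (x : Fin n → ℝ) (ξ : Fin (n-1) → ℝ) : Matrix (Fin (n-1)) (Fin (n-1)) ℝ :=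
  Matrix.of fun i j => fderiv ℝ (fun η => gradXi n φ x η i) ξ (Pi.single j (1:ℝ))

/-- Mixed Hessian ∇_x∇_ξφ(x,ξ) : entry (i,j) is ∂_{x_i}∂_{ξ_j}φ. -/
def mixedHess (n : ℕ) (φ : (Fin n → ℝ) → (Fin (n-1) → ℝ) → ℝ)
    (x : Fin n → ℝ) (ξ : Fin (n-1) → ℝ) : Matrix (Fin n) (Fin (n-1)) ℝ :=
  Matrix.of fun i j => fderiv ℝ (fun y => gradXi n φ y ξ j) x (Pi.single i (1:ℝ))

/-- Gauss map: G(x,ξ)ᵢ = det(∂_{ξ_1}∇_xφ, …, ∂_{ξ_{n-1}}∇_xφ, eᵢ), so that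
⟨G(x,ξ), w⟩ = det(∂_{ξ_1}∇_xφ, …, ∂_{ξ_{n-1}}∇_xφ, w) for all w. -/
def gaussMap (n : ℕ) (φ : (Fin n → ℝ) → (Fin (n-1) → ℝ) → ℝ)
    (x : Fin n → ℝ) (ξ : Fin (n-1) → ℝ) : Fin n → ℝ :=
  fun i => Matrix.det (Matrix.of fun a b : Fin n =>
    if h : (b : ℕ) < n - 1 then mixedHess n φ x ξ a ⟨(b : ℕ), h⟩
    else (Pi.single i (1:ℝ) : Fin n → ℝ) a)

/-- Directional derivative (G(x,ξ)·∇_x) f at x. -/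
def GD (n : ℕ) (φ : (Fin n → ℝ) → (Fin (n-1) → ℝ) → ℝ)
    (f : (Fin n → ℝ) → ℝ) (ξ : Fin (n-1) → ℝ) (x : Fin n → ℝ) : ℝ :=
  fderiv ℝ f x (gaussMap n φ x ξ)

/-- The matrix (G(x,ξ)·∇_x)∇_ξ²φ(x,ξ). -/
def GDhess (n : ℕ) (φ : (Fin n → ℝ) → (Fin (n-1) → ℝ) → ℝ)
    (x : Fin n → ℝ) (ξ : Fin (n-1) → ℝ) : Matrix (Fin (n-1)) (Fin (n-1)) ℝ :=
  Matrix.of fun i j => GD n φ (fun y => hessXi n φ y ξ i j) ξ x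

/-- The matrix (G(x,ξ)·∇_x)²∇_ξ²φ(x,ξ). -/
def GD2hess (n : ℕ) (φ : (Fin n → ℝ) → (Fin (n-1) → ℝ) → ℝ)
    (x : Fin n → ℝ) (ξ : Fin (n-1) → ℝ) : Matrix (Fin (n-1)) (Fin (n-1)) ℝ :=
  Matrix.of fun i j => GD n φ (fun y => GD n φ (fun z => hessXi n φ z ξ i j) ξ y) ξ x

/-- Bourgain's condition on M × Σ. -/
def BourgainCond (n : ℕ) (φ : (Fin n → ℝ) → (Fin (n-1) → ℝ) → ℝ)
    (M : Set (Fin n → ℝ)) (Ω : Set (Fin (n-1) → ℝ)) : Prop :=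
  ∃ lam : (Fin n → ℝ) → (Fin (n-1) → ℝ) → ℝ,
    ∀ x ∈ M, ∀ ξ ∈ Ω, GD2hess n φ x ξ = lam x ξ • GDhess n φ x ξ

/-- Hörmander-type phase function: smooth, (H1) and (H2) on M × Σ. -/
def IsHormander (n : ℕ) (φ : (Fin n → ℝ) → (Fin (n-1) → ℝ) → ℝ)
    (M : Set (Fin n → ℝ)) (Ω : Set (Fin (n-1) → ℝ)) : Prop :=
  ContDiffOn ℝ (⊤ : ℕ∞) (fun q : (Fin n → ℝ) × (Fin (n-1) → ℝ) => φ q.1 q.2) (M ×ˢ Ω) ∧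
  (∀ x ∈ M, ∀ ξ ∈ Ω, (mixedHess n φ x ξ).rank = n - 1) ∧
  (∀ x ∈ M, ∀ ξ ∈ Ω, (GDhess n φ x ξ).det ≠ 0)

/-- The point (x̄, t) ∈ ℝⁿ. -/
def toPt (n : ℕ) (xb : Fin (n-1) → ℝ) (t : ℝ) : Fin n → ℝ :=
  fun i => if h : (i : ℕ) < n - 1 then xb ⟨(i : ℕ), h⟩ else t

/-- line_{ξ,v} = {(v,0) − s(ξ,1) : s ∈ ℝ} ⊆ ℝⁿ. -/
def lineSet (n : ℕ) (ξ v : Fin (n-1) → ℝ) : Set (Fin n → ℝ) :=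
  {p | ∃ s : ℝ, p = toPt n v 0 - s • toPt n ξ 1}

end

noncomputable section

/-- The tan-example phase function in ℝⁿ with n = m+3.  Coordinates:
x = (x′, x_{n-1}, t) with x′ = (x 0, …, x m), x_{n-1} = x (m+1), t = x (m+2);
ξ = (ξ′, ξ_{n-1}) with ξ′ = (ξ 0, …, ξ m), ξ_{n-1} = ξ (m+1).
φ(x,ξ) = x′·ξ′ + ½ t² |ξ′|² + log (sec (t ξ_{n-1} + x_{n-1})). -/
def φtan (m : ℕ) (x : Fin (m+3) → ℝ) (ξ : Fin (m+2) → ℝ) : ℝ :=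
  (∑ i : Fin (m+1), x (Fin.castLE (by omega) i) * ξ (Fin.castLE (by omega) i))
  + (1/2) * (x ⟨m+2, by omega⟩)^2 * (∑ i : Fin (m+1), (ξ (Fin.castLE (by omega) i))^2)
  + Real.log ((Real.cos (x ⟨m+2, by omega⟩ * ξ ⟨m+1, by omega⟩ + x ⟨m+1, by omega⟩))⁻¹)

/-- The unique solution x̄ of ∇_ξφ_{n,tan}((x̄,t),ξ) = v:
x′ = v′ − t²ξ′ and x_{n-1} = arctan(v_{n-1}/t) − t ξ_{n-1}. -/
def xsolTan (m : ℕ) (ξ v : Fin (m+2) → ℝ) (t : ℝ) : Fin (m+2) → ℝ :=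
  fun i => if (i : ℕ) < m+1 then v i - t^2 * ξ i
    else Real.arctan (v ⟨m+1, by omega⟩ / t) - t * ξ ⟨m+1, by omega⟩

/-- The φ_{n,tan}-curve ℓ_{ξ,v} = {(v′−t²ξ′, arctan(v_{n-1}/t) − tξ_{n-1}, t) : |t−1| ≤ 1/10}. -/
def ellTan (m : ℕ) (ξ v : Fin (m+2) → ℝ) : Set (Fin (m+3) → ℝ) :=
  {x | ∃ t : ℝ, |t - 1| ≤ 1/10 ∧ x = toPt (m+3) (xsolTan m ξ v t) t}

noncomputable section

open Real

namespace TanPf2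

def phiv (v : ℝ) : ℝ := -(v/(1+v^2)) - Real.arctan v
def psiv (v : ℝ) : ℝ := 2*v/(1+v^2)^2

variable {m : ℕ}

def LIdx (m : ℕ) : Fin (m+3) := ⟨m+2, by omega⟩
def yIdx (m : ℕ) : Fin (m+3) := ⟨m+1, by omega⟩
def ey (m : ℕ) : Fin (m+3) → ℝ := Pi.single (yIdx m) 1
def et (m : ℕ) : Fin (m+3) → ℝ := Pi.single (LIdx m) 1

def phat (m : ℕ) (σ : Fin (m+2) → ℝ) : Fin (m+3) → ℝ :=
  fun i => if h : (i:ℕ) < m+1 then -2 * σ ⟨(i:ℕ), by omega⟩ else 0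

def curveC (m : ℕ) (σ : Fin (m+2) → ℝ) (v t : ℝ) : Fin (m+3) → ℝ :=
  fun i => if h : (i:ℕ) < m+1 then (1-t^2) * σ ⟨(i:ℕ), by omega⟩
    else if (i:ℕ) < m+2 then Real.arctan (v/t) - t * Real.arctan v else t

def curveD (m : ℕ) (σ : Fin (m+2) → ℝ) (v t : ℝ) : Fin (m+3) → ℝ :=
  fun i => if h : (i:ℕ) < m+1 then -2*t * σ ⟨(i:ℕ), by omega⟩
    else if (i:ℕ) < m+2 then -v/(t^2+v^2) - Real.arctan v else 1

def wvec (m : ℕ) (σ : Fin (m+2) → ℝ) (v : ℝ) : Fin (m+3) → ℝ :=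
  fun i => if h : (i:ℕ) < m+1 then -2 * σ ⟨(i:ℕ), by omega⟩
    else if (i:ℕ) < m+2 then phiv v else 1

def uvec (m : ℕ) (σ : Fin (m+2) → ℝ) (v : ℝ) : Fin (m+3) → ℝ :=
  fun i => if h : (i:ℕ) < m+1 then -2 * σ ⟨(i:ℕ), by omega⟩
    else if (i:ℕ) < m+2 then psiv v else 0

def xiP (m : ℕ) (σ : Fin (m+2) → ℝ) (v : ℝ) : Fin (m+2) → ℝ :=
  fun j => if (j:ℕ) < m+1 then σ j else Real.arctan v

def vP (m : ℕ) (σ : Fin (m+2) → ℝ) (v : ℝ) : Fin (m+2) → ℝ :=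
  fun j => if (j:ℕ) < m+1 then σ j else v

lemma curveC_one (σ : Fin (m+2) → ℝ) (v : ℝ) :
    curveC m σ v 1 = toPt (m+3) (fun _ => (0:ℝ)) 1 := by
  funext i
  simp only [curveC, toPt]
  rcases lt_or_ge (i:ℕ) (m+1) with h | h
  · rw [dif_pos h, dif_pos (by omega : (i:ℕ) < m+3-1)]; ring
  · rcases lt_or_ge (i:ℕ) (m+2) with h2 | h2
    · rw [dif_neg (by omega), if_pos h2, dif_pos (by omega : (i:ℕ) < m+3-1)]
      norm_num
    · rw [dif_neg (by omega), if_neg (by omega), dif_neg (by omega : ¬ (i:ℕ) < m+3-1)]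

lemma curveC_eq_toPt (σ : Fin (m+2) → ℝ) (v t : ℝ) :
    curveC m σ v t = toPt (m+3) (xsolTan m (xiP m σ v) (vP m σ v) t) t := by
  funext i
  simp only [curveC, toPt, xsolTan, xiP, vP]
  rcases lt_or_ge (i:ℕ) (m+1) with h | h
  · rw [dif_pos h, dif_pos (by omega : (i:ℕ) < m+3-1)]
    simp only [if_pos (show ((⟨(i:ℕ), by omega⟩ : Fin (m+2)):ℕ) < m+1 from h)]
    ring
  · rcases lt_or_ge (i:ℕ) (m+2) with h2 | h2
    · rw [dif_neg (by omega), if_pos h2, dif_pos (by omega : (i:ℕ) < m+3-1)]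
      simp only [if_neg (show ¬ ((⟨(i:ℕ), by omega⟩ : Fin (m+2)):ℕ) < m+1 by simp; omega)]
      simp only [if_neg (show ¬ ((⟨m+1, by omega⟩ : Fin (m+2)):ℕ) < m+1 by simp)]
    · rw [dif_neg (by omega), if_neg (by omega), dif_neg (by omega : ¬ (i:ℕ) < m+3-1)]

lemma hasDerivAt_curveC (σ : Fin (m+2) → ℝ) (v : ℝ) {t : ℝ} (ht : 1/2 < t) :
    HasDerivAt (fun t => curveC m σ v t) (curveD m σ v t) t := by
  have ht0 : t ≠ 0 := by linarith
  have htv : t^2 + v^2 ≠ 0 := by positivity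
  rw [hasDerivAt_pi]
  intro i
  simp only [curveC, curveD]
  rcases lt_or_ge (i:ℕ) (m+1) with h | h
  · simp only [dif_pos h]
    have : HasDerivAt (fun t : ℝ => (1-t^2) * σ ⟨(i:ℕ), by omega⟩)
        (-2*t * σ ⟨(i:ℕ), by omega⟩) t := by
      have := ((hasDerivAt_pow 2 t).const_sub 1).mul_const (σ ⟨(i:ℕ), by omega⟩)
      exact this.congr_deriv (by ring)
    exact this
  · rcases lt_or_ge (i:ℕ) (m+2) with h2 | h2
    · simp only [dif_neg (by omega : ¬ (i:ℕ) < m+1), if_pos h2]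
      have hdiv : HasDerivAt (fun t : ℝ => v/t) (-v/t^2) t := by
        have := (hasDerivAt_inv ht0).const_mul v
        simp only [div_eq_mul_inv]
        exact this.congr_deriv (by ring)
      have harc := (Real.hasDerivAt_arctan (v/t)).comp t hdiv
      have hlin : HasDerivAt (fun t : ℝ => t * Real.arctan v) (Real.arctan v) t := by
        simpa using (hasDerivAt_id t).mul_const (Real.arctan v)
      have := harc.sub hlin
      exact this.congr_deriv (by field_simp)
    · simp only [dif_neg (by omega : ¬ (i:ℕ) < m+1), if_neg (by omega : ¬ (i:ℕ) < m+2)]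
      exact hasDerivAt_id t

lemma curveD_one (σ : Fin (m+2) → ℝ) (v : ℝ) : curveD m σ v 1 = wvec m σ v := by
  funext i
  simp only [curveD, wvec, phiv]
  rcases lt_or_ge (i:ℕ) (m+1) with h | h
  · simp only [dif_pos h]; ring
  · rcases lt_or_ge (i:ℕ) (m+2) with h2 | h2
    · simp only [dif_neg (by omega : ¬ (i:ℕ) < m+1), if_pos h2]
      norm_num [neg_div]
    · simp only [dif_neg (by omega : ¬ (i:ℕ) < m+1), if_neg (by omega : ¬ (i:ℕ) < m+2)]

lemma hasDerivAt_curveD (σ : Fin (m+2) → ℝ) (v : ℝ) :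
    HasDerivAt (fun t => curveD m σ v t) (uvec m σ v) (1:ℝ) := by
  have htv : (1:ℝ)^2 + v^2 ≠ 0 := by positivity
  rw [hasDerivAt_pi]
  intro i
  simp only [curveD, uvec]
  rcases lt_or_ge (i:ℕ) (m+1) with h | h
  · simp only [dif_pos h]
    have := (hasDerivAt_id (1:ℝ)).const_mul (-2 : ℝ) |>.mul_const (σ ⟨(i:ℕ), by omega⟩)
    exact this.congr_deriv (by ring)
  · rcases lt_or_ge (i:ℕ) (m+2) with h2 | h2
    · simp only [dif_neg (by omega : ¬ (i:ℕ) < m+1), if_pos h2, psiv]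
      have hden : HasDerivAt (fun t : ℝ => t^2 + v^2) (2*1) (1:ℝ) := by
        simpa using (hasDerivAt_pow 2 (1:ℝ)).add_const (v^2)
      have := ((hasDerivAt_const (1:ℝ) (-v)).div hden htv).sub_const (Real.arctan v)
      exact this.congr_deriv (by ring)
    · simp only [dif_neg (by omega : ¬ (i:ℕ) < m+1), if_neg (by omega : ¬ (i:ℕ) < m+2)]
      exact hasDerivAt_const 1 1

lemma wvec_eq (σ : Fin (m+2) → ℝ) (v : ℝ) :
    wvec m σ v = phat m σ + phiv v • ey m + et m := by
  funext i
  simp only [wvec, phat, ey, et, Pi.add_apply, Pi.smul_apply, smul_eq_mul]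
  rcases lt_or_ge (i:ℕ) (m+1) with h | h
  · rw [dif_pos h, dif_pos h,
      Pi.single_eq_of_ne (fun hh => by rw [hh] at h; simp [yIdx] at h) 1,
      Pi.single_eq_of_ne (fun hh => by rw [hh] at h; simp [LIdx] at h) 1]
    ring
  · rcases lt_or_ge (i:ℕ) (m+2) with h2 | h2
    · have : i = yIdx m := Fin.ext (by simp [yIdx]; omega)
      subst this
      rw [dif_neg (by omega), if_pos h2, dif_neg (by omega), Pi.single_eq_same,
        Pi.single_eq_of_ne (fun hh => by simp [yIdx, LIdx, Fin.ext_iff] at hh) 1]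
      ring
    · have : i = LIdx m := Fin.ext (by simp [LIdx]; omega)
      subst this
      rw [dif_neg (by omega), if_neg (by omega), dif_neg (by omega), Pi.single_eq_same,
        Pi.single_eq_of_ne (fun hh => by simp [yIdx, LIdx, Fin.ext_iff] at hh) 1]
      ring

lemma uvec_eq (σ : Fin (m+2) → ℝ) (v : ℝ) :
    uvec m σ v = phat m σ + psiv v • ey m := by
  funext i
  simp only [uvec, phat, ey, Pi.add_apply, Pi.smul_apply, smul_eq_mul]
  rcases lt_or_ge (i:ℕ) (m+1) with h | h
  · rw [dif_pos h, dif_pos h,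
      Pi.single_eq_of_ne (fun hh => by rw [hh] at h; simp [yIdx] at h) 1]
    ring
  · rcases lt_or_ge (i:ℕ) (m+2) with h2 | h2
    · have : i = yIdx m := Fin.ext (by simp [yIdx]; omega)
      subst this
      rw [dif_neg (by omega), if_pos h2, dif_neg (by omega), Pi.single_eq_same]
      ring
    · have : i = LIdx m := Fin.ext (by simp [LIdx]; omega)
      subst this
      rw [dif_neg (by omega), if_neg (by omega), dif_neg (by omega),
        Pi.single_eq_of_ne (fun hh => by simp [yIdx, LIdx, Fin.ext_iff] at hh) 1]
      ring

lemma phat_smul (σ : Fin (m+2) → ℝ) (ε : ℝ) : phat m (ε • σ) = ε • phat m σ := by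
  funext i
  simp only [phat, Pi.smul_apply, smul_eq_mul]
  rcases lt_or_ge (i:ℕ) (m+1) with h | h
  · rw [dif_pos h, dif_pos h]; ring
  · rw [dif_neg (by omega), dif_neg (by omega)]; ring

def p0 (m : ℕ) : Fin (m+3) → ℝ := toPt (m+3) (fun _ => (0:ℝ)) 1

lemma master {F : (Fin (m+3) → ℝ) → (Fin (m+3) → ℝ)}
    {ε₀ : ℝ} (hε₀ : 0 < ε₀)
    {Ξ V : (Fin (m+2) → ℝ) × (Fin (m+2) → ℝ) → (Fin (m+2) → ℝ)}
    {U : Set ((Fin (m+2) → ℝ) × (Fin (m+2) → ℝ))}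
    (hFsm : ContDiffOn ℝ (⊤:ℕ∞) F (ball (p0 m) ε₀))
    (hline : ∀ p ∈ U, F '' (ellTan m p.1 p.2 ∩ ball (p0 m) ε₀) ⊆ lineSet (m+3) (Ξ p) (V p))
    (σ : Fin (m+2) → ℝ) (v : ℝ)
    (hU : (xiP m σ v, vP m σ v) ∈ U)
    (i : Fin (m+3)) (hi : (i:ℕ) < m+2) :
    (fderiv ℝ (fderiv ℝ (fun x => F x i)) (p0 m) (wvec m σ v) (wvec m σ v)
      + fderiv ℝ (fun x => F x i) (p0 m) (uvec m σ v))
      * (fderiv ℝ (fun x => F x (LIdx m)) (p0 m) (wvec m σ v))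
    = (fderiv ℝ (fderiv ℝ (fun x => F x (LIdx m))) (p0 m) (wvec m σ v) (wvec m σ v)
      + fderiv ℝ (fun x => F x (LIdx m)) (p0 m) (uvec m σ v))
      * (fderiv ℝ (fun x => F x i) (p0 m) (wvec m σ v)) := by
  set p₀ := p0 m with hp₀def
  set c : ℝ → Fin (m+3) → ℝ := fun t => curveC m σ v t with hcdef
  have hc1 : c 1 = p₀ := curveC_one σ v
  have hball : p₀ ∈ ball p₀ ε₀ := mem_ball_self hε₀
  have hcd : ∀ t : ℝ, 1/2 < t → HasDerivAt c (curveD m σ v t) t :=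
    fun t ht => hasDerivAt_curveC σ v ht
  have hcont : ContinuousAt c 1 := (hcd 1 (by norm_num)).continuousAt
  have hevB : ∀ᶠ t in 𝓝 (1:ℝ), c t ∈ ball p₀ ε₀ := by
    have h1 : ball p₀ ε₀ ∈ 𝓝 (c 1) := by rw [hc1]; exact isOpen_ball.mem_nhds hball
    exact hcont.preimage_mem_nhds h1
  have hev110 : ∀ᶠ t in 𝓝 (1:ℝ), |t - 1| ≤ 1/10 := by
    have : Ioo (9/10:ℝ) (11/10) ∈ 𝓝 (1:ℝ) := Ioo_mem_nhds (by norm_num) (by norm_num)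
    filter_upwards [this] with t ht
    rw [abs_le]
    constructor <;> [linarith [ht.1]; linarith [ht.2]]
  have hevhalf : ∀ᶠ t in 𝓝 (1:ℝ), 1/2 < t :=
    Ioi_mem_nhds (by norm_num : (1/2:ℝ) < 1)
  have hevaff : ∀ᶠ t in 𝓝 (1:ℝ), ∀ j : Fin (m+3), ∀ hj : (j:ℕ) < m+2,
      F (c t) j = V (xiP m σ v, vP m σ v) ⟨(j:ℕ), hj⟩
        + F (c t) (LIdx m) * Ξ (xiP m σ v, vP m σ v) ⟨(j:ℕ), hj⟩ := by
    filter_upwards [hevB, hev110] with t h1 h2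
    have hmem : F (c t) ∈ lineSet (m+3) (Ξ (xiP m σ v, vP m σ v)) (V (xiP m σ v, vP m σ v)) :=
      hline _ hU ⟨c t, ⟨⟨t, h2, curveC_eq_toPt σ v t⟩, h1⟩, rfl⟩
    obtain ⟨s, hs⟩ := hmem
    intro j hj
    have hL : F (c t) (LIdx m) = -s := by
      rw [hs]
      simp only [Pi.sub_apply, Pi.smul_apply, smul_eq_mul, toPt]
      rw [dif_neg (show ¬ ((LIdx m : ℕ) < m+3-1) by simp [LIdx]),
        dif_neg (show ¬ ((LIdx m : ℕ) < m+3-1) by simp [LIdx])]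
      ring
    have hj' : F (c t) j = V (xiP m σ v, vP m σ v) ⟨(j:ℕ), hj⟩
        - s * Ξ (xiP m σ v, vP m σ v) ⟨(j:ℕ), hj⟩ := by
      rw [hs]
      simp only [Pi.sub_apply, Pi.smul_apply, smul_eq_mul, toPt]
      rw [dif_pos (show (j:ℕ) < m+3-1 by omega), dif_pos (show (j:ℕ) < m+3-1 by omega)]
    rw [hj', hL]
    ring
  have hevdiff : ∀ᶠ t in 𝓝 (1:ℝ), ∀ j : Fin (m+3),
      HasDerivAt (fun τ => F (c τ) j) (fderiv ℝ (fun x => F x j) (c t) (curveD m σ v t)) t := by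
    filter_upwards [hevB, hevhalf] with t h1 h2
    intro j
    have hFj : ContDiffAt ℝ (⊤:ℕ∞) (fun x => F x j) (c t) :=
      contDiffAt_pi.1 (hFsm.contDiffAt (isOpen_ball.mem_nhds h1)) j
    exact (hFj.differentiableAt (by simp)).hasFDerivAt.comp_hasDerivAt t (hcd t h2)
  obtain ⟨O, hO, hOopen, hO1⟩ := _root_.eventually_nhds_iff.1 (hevaff.and hevdiff)
  set D : Fin (m+3) → ℝ → ℝ :=
    fun j t => fderiv ℝ (fun x => F x j) (c t) (curveD m σ v t) with hDdef
  set Ξi := Ξ (xiP m σ v, vP m σ v) ⟨(i:ℕ), hi⟩ with hΞidef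
  have hDrel : ∀ t ∈ O, D i t = D (LIdx m) t * Ξi := by
    intro t ht
    have hder := (hO t ht).2
    have haff : (fun τ => F (c τ) i) =ᶠ[𝓝 t]
        fun τ => V (xiP m σ v, vP m σ v) ⟨(i:ℕ), hi⟩ + F (c τ) (LIdx m) * Ξi := by
      filter_upwards [hOopen.mem_nhds ht] with τ hτ
      exact (hO τ hτ).1 i hi
    have h2 : HasDerivAt
        (fun τ => V (xiP m σ v, vP m σ v) ⟨(i:ℕ), hi⟩ + F (c τ) (LIdx m) * Ξi)
        (D (LIdx m) t * Ξi) t :=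
      ((hder (LIdx m)).mul_const Ξi).const_add _
    exact (hder i).unique (h2.congr_of_eventuallyEq haff)
  have hc1' : HasDerivAt c (wvec m σ v) 1 := by
    have := hcd 1 (by norm_num)
    rwa [curveD_one] at this
  have hS : ∀ j : Fin (m+3), HasDerivAt (D j)
      (fderiv ℝ (fderiv ℝ (fun x => F x j)) p₀ (wvec m σ v) (wvec m σ v)
        + fderiv ℝ (fun x => F x j) p₀ (uvec m σ v)) 1 := by
    intro j
    have hFj : ContDiffAt ℝ (⊤:ℕ∞) (fun x => F x j) p₀ :=
      contDiffAt_pi.1 (hFsm.contDiffAt (isOpen_ball.mem_nhds hball)) j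
    have hfd : HasFDerivAt (fderiv ℝ (fun x => F x j))
        (fderiv ℝ (fderiv ℝ (fun x => F x j)) p₀) p₀ :=
      ((hFj.fderiv_right (m := 1) (WithTop.coe_le_coe.2 le_top)).differentiableAt (by simp)).hasFDerivAt
    have hfd' : HasFDerivAt (fderiv ℝ (fun x => F x j))
        (fderiv ℝ (fderiv ℝ (fun x => F x j)) p₀) (c 1) := by rw [hc1]; exact hfd
    have hG : HasDerivAt (fun t => fderiv ℝ (fun x => F x j) (c t))
        (fderiv ℝ (fderiv ℝ (fun x => F x j)) p₀ (wvec m σ v)) 1 :=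
      hfd'.comp_hasDerivAt 1 hc1'
    have hfinal := hG.clm_apply (hasDerivAt_curveD σ v)
    rw [curveD_one, hc1] at hfinal
    exact hfinal
  have hev1 : D i =ᶠ[𝓝 1] fun t => D (LIdx m) t * Ξi := by
    filter_upwards [hOopen.mem_nhds hO1] with t ht using hDrel t ht
  have hSi' : HasDerivAt (D i)
      ((fderiv ℝ (fderiv ℝ (fun x => F x (LIdx m))) p₀ (wvec m σ v) (wvec m σ v)
        + fderiv ℝ (fun x => F x (LIdx m)) p₀ (uvec m σ v)) * Ξi) 1 :=
    (((hS (LIdx m)).mul_const Ξi)).congr_of_eventuallyEq hev1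
  have hkey2 := (hS i).unique hSi'
  have hkey1 := hDrel 1 hO1
  have hD1 : ∀ j : Fin (m+3), D j 1 = fderiv ℝ (fun x => F x j) p₀ (wvec m σ v) := by
    intro j
    rw [hDdef]
    simp only
    rw [hc1, curveD_one]
  rw [hD1, hD1] at hkey1
  rw [hkey2, hkey1]
  ring

lemma opsq (v : ℝ) : (1:ℝ)+v^2 ≠ 0 := by positivity

lemma hasDerivAt_phiv (v : ℝ) : HasDerivAt phiv (-2/(1+v^2)^2) v := by
  have h1 : HasDerivAt (fun v : ℝ => v/(1+v^2)) ((1*(1+v^2) - v*(2*v))/(1+v^2)^2) v := by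
    exact ((hasDerivAt_id v).div (((hasDerivAt_pow 2 v).const_add 1)) (opsq v)).congr_deriv (by simp)
  have h2 := (h1.neg).sub (Real.hasDerivAt_arctan v)
  exact h2.congr_deriv (by field_simp; ring)

lemma hasDerivAt_psiv (v : ℝ) : HasDerivAt psiv (2*(1-3*v^2)/(1+v^2)^3) v := by
  have h1 := ((hasDerivAt_id v).const_mul 2).div
      (((hasDerivAt_pow 2 v).const_add 1).pow 2) (show ((1:ℝ)+v^2)^2 ≠ 0 by positivity)
  have := opsq v
  exact h1.congr_deriv (by simp only [Pi.pow_apply, id]; field_simp; ring)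

lemma eqOn_hasDerivAt {f g : ℝ → ℝ} {I : Set ℝ} (hI : IsOpen I) (hfg : EqOn f g I)
    {v : ℝ} (hv : v ∈ I) {d : ℝ} (hg : HasDerivAt g d v) : HasDerivAt f d v :=
  hg.congr_of_eventuallyEq (by filter_upwards [hI.mem_nhds hv] using fun x hx => hfg hx)

lemma cubic_impossible (c0 c1 c2 c3 δ : ℝ) (hδ : 0 < δ)
    (h : ∀ v : ℝ, |v| < δ → psiv v = c0 + c1 * phiv v + c2 * (phiv v)^2 + c3 * (phiv v)^3) :
    False := by
  set I : Set ℝ := Ioo (-δ) δ with hI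
  have hIopen : IsOpen I := isOpen_Ioo
  have hmem : ∀ v : ℝ, v ∈ I → |v| < δ := fun v hv => abs_lt.2 ⟨hv.1, hv.2⟩
  -- step 1
  have h1 : ∀ v ∈ I, c1 + 2*c2*phiv v + 3*c3*(phiv v)^2 = (3*v^2-1)/(1+v^2) := by
    intro v hv
    have hq : HasDerivAt (fun y : ℝ => c0 + c1*y + c2*y^2 + c3*y^3)
        (c1 + 2*c2*(phiv v) + 3*c3*(phiv v)^2) (phiv v) := by
      have := (((hasDerivAt_id (phiv v)).const_mul c1).const_add c0).add
        (((hasDerivAt_pow 2 (phiv v)).const_mul c2)) |>.add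
        (((hasDerivAt_pow 3 (phiv v)).const_mul c3))
      exact this.congr_deriv (by ring)
    have hcomp := hq.comp v (hasDerivAt_phiv v)
    have hpsi : HasDerivAt psiv ((c1 + 2*c2*(phiv v) + 3*c3*(phiv v)^2) * (-2/(1+v^2)^2)) v := by
      refine eqOn_hasDerivAt hIopen ?_ hv hcomp
      intro x hx
      exact h x (hmem x hx)
    have heq := hpsi.unique (hasDerivAt_psiv v)
    have h2 := opsq v
    field_simp at heq
    rw [eq_div_iff h2]
    have key : ((c1 + 2*c2*phiv v + 3*c3*(phiv v)^2) * (1+v^2) - (3*v^2-1)) * (2*(1+v^2)^2) = 0 := by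
      linear_combination (-(2*(1+v^2)^2)) * heq
    rcases mul_eq_zero.1 key with hk | hk
    · linarith [sub_eq_zero.1 hk]
    · exact absurd hk (by positivity)
  -- step 2
  have h2 : ∀ v ∈ I, 2*c2 + 6*c3*phiv v = -4*v := by
    intro v hv
    have hq : HasDerivAt (fun y : ℝ => c1 + 2*c2*y + 3*c3*y^2)
        (2*c2 + 6*c3*(phiv v)) (phiv v) := by
      have := (((hasDerivAt_id (phiv v)).const_mul (2*c2)).const_add c1).add
        (((hasDerivAt_pow 2 (phiv v)).const_mul (3*c3)))
      exact this.congr_deriv (by ring)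
    have hcomp := hq.comp v (hasDerivAt_phiv v)
    have hrhs : HasDerivAt (fun v : ℝ => (3*v^2-1)/(1+v^2))
        (((6*v)*(1+v^2) - (3*v^2-1)*(2*v))/(1+v^2)^2) v := by
      have := (((hasDerivAt_pow 2 v).const_mul 3).sub_const 1).div
        ((hasDerivAt_pow 2 v).const_add 1) (opsq v)
      exact this.congr_deriv (by ring)
    have hlhs : HasDerivAt (fun v : ℝ => c1 + 2*c2*phiv v + 3*c3*(phiv v)^2)
        (((6*v)*(1+v^2) - (3*v^2-1)*(2*v))/(1+v^2)^2) v := by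
      refine eqOn_hasDerivAt hIopen ?_ hv hrhs
      intro x hx
      simpa using h1 x hx
    have heq := (hcomp.congr_deriv rfl).unique hlhs
    have hne := opsq v
    field_simp at heq
    have key : ((2*c2 + 6*c3*phiv v) - (-4*v)) * (2*(1+v^2)^2) = 0 := by
      linear_combination (-(1+v^2)^2) * heq
    rcases mul_eq_zero.1 key with hk | hk
    · linarith [sub_eq_zero.1 hk]
    · exact absurd hk (by positivity)
  -- step 3
  have h3 : ∀ v ∈ I, 6*c3 * (-2/(1+v^2)^2) = -4 := by
    intro v hv
    have hq : HasDerivAt (fun y : ℝ => 2*c2 + 6*c3*y) (6*c3) (phiv v) := by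
      simpa using ((hasDerivAt_id (phiv v)).const_mul (6*c3)).const_add (2*c2)
    have hcomp := hq.comp v (hasDerivAt_phiv v)
    have hrhs : HasDerivAt (fun v : ℝ => (-4)*v) (-4) v := by
      simpa using (hasDerivAt_id v).const_mul (-4:ℝ)
    have hlhs : HasDerivAt (fun v : ℝ => 2*c2 + 6*c3*phiv v) (-4 : ℝ) v := by
      refine eqOn_hasDerivAt hIopen ?_ hv hrhs
      intro x hx
      simpa using h2 x hx
    exact hcomp.unique hlhs
  have hz : (0:ℝ) ∈ I := by constructor <;> simp [hδ] <;> linarith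
  have hd : (δ/2) ∈ I := by constructor <;> nlinarith
  have e0 := h3 0 hz
  have ed := h3 (δ/2) hd
  have hne : ((1:ℝ)+(δ/2)^2)^2 ≠ 0 := by positivity
  norm_num at e0
  field_simp at ed
  nlinarith [sq_nonneg δ, sq_nonneg (δ/2)]


lemma cubic_impossible' (k C0 C1 C2 C3 δ : ℝ) (hδ : 0 < δ) (hk : k ≠ 0)
    (h : ∀ v : ℝ, |v| < δ → k * psiv v = C0 + C1 * phiv v + C2 * (phiv v)^2 + C3 * (phiv v)^3) :
    False := by
  refine cubic_impossible (C0/k) (C1/k) (C2/k) (C3/k) δ hδ (fun v hv => ?_)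
  field_simp
  linear_combination h v hv

lemma phat_zero : phat m 0 = 0 := by
  funext i
  simp only [phat]
  split_ifs <;> simp

lemma bilin_expand (B : (Fin (m+3) → ℝ) →L[ℝ] (Fin (m+3) → ℝ) →L[ℝ] ℝ)
    (x y : Fin (m+3) → ℝ) (X : ℝ) :
    B (x + X • y) (x + X • y) = B x x + X * (B x y + B y x) + X^2 * B y y := by
  simp only [map_add, _root_.map_smul, ContinuousLinearMap.add_apply, ContinuousLinearMap.smul_apply,
    smul_eq_mul]
  ring

lemma lin_expand (A : (Fin (m+3) → ℝ) →L[ℝ] (Fin (m+3) → ℝ)) (x y : Fin (m+3) → ℝ) (X : ℝ)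
    (j : Fin (m+3)) : A (x + X • y) j = A x j + X * A y j := by
  simp only [map_add, _root_.map_smul, Pi.add_apply, Pi.smul_apply, smul_eq_mul]

end TanPf2

end

open TanPf2 Real in
set_option maxHeartbeats 2000000 in
theorem stmt15 (m : ℕ) (ε₀ : ℝ) (hε₀ : 0 < ε₀) :
    ¬ ∃ (F Finv : (Fin (m+3) → ℝ) → (Fin (m+3) → ℝ))
        (Ξ V : (Fin (m+2) → ℝ) × (Fin (m+2) → ℝ) → (Fin (m+2) → ℝ))
        (U : Set ((Fin (m+2) → ℝ) × (Fin (m+2) → ℝ))),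
      ContDiffOn ℝ (⊤ : ℕ∞) F (ball (toPt (m+3) (fun _ => (0:ℝ)) 1) ε₀) ∧
      InjOn F (ball (toPt (m+3) (fun _ => (0:ℝ)) 1) ε₀) ∧
      IsOpen (F '' ball (toPt (m+3) (fun _ => (0:ℝ)) 1) ε₀) ∧
      ContDiffOn ℝ (⊤ : ℕ∞) Finv (F '' ball (toPt (m+3) (fun _ => (0:ℝ)) 1) ε₀) ∧
      (∀ y ∈ ball (toPt (m+3) (fun _ => (0:ℝ)) 1) ε₀, Finv (F y) = y) ∧
      U ∈ 𝓝 ((0, 0) : (Fin (m+2) → ℝ) × (Fin (m+2) → ℝ)) ∧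
      ∀ p ∈ U, F '' (ellTan m p.1 p.2 ∩ ball (toPt (m+3) (fun _ => (0:ℝ)) 1) ε₀) ⊆
        lineSet (m+3) (Ξ p) (V p) := by
  rintro ⟨F, Finv, Ξ, V, U, hFsm, hFinj, hFopen, hFinvsm, hFinveq, hU, hline⟩
  have hFsm' : ContDiffOn ℝ (⊤:ℕ∞) F (ball (p0 m) ε₀) := hFsm
  have hline' : ∀ p ∈ U, F '' (ellTan m p.1 p.2 ∩ ball (p0 m) ε₀) ⊆
      lineSet (m+3) (Ξ p) (V p) := hline
  set p₀ : Fin (m+3) → ℝ := p0 m with hp₀def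
  have hball : p₀ ∈ ball p₀ ε₀ := mem_ball_self hε₀
  -- δ such that small parameters lie in U
  obtain ⟨δ, hδpos, hδU⟩ : ∃ δ > 0, ∀ (σ : Fin (m+2) → ℝ) (v : ℝ), ‖σ‖ < δ → |v| < δ →
      (xiP m σ v, vP m σ v) ∈ U := by
    have hcontP : Continuous (fun q : (Fin (m+2) → ℝ) × ℝ =>
        ((xiP m q.1 q.2, vP m q.1 q.2) : (Fin (m+2) → ℝ) × (Fin (m+2) → ℝ))) := by
      apply Continuous.prodMk
      · apply continuous_pi
        intro j
        simp only [xiP]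
        split_ifs
        · exact (continuous_apply j).comp continuous_fst
        · exact Real.continuous_arctan.comp continuous_snd
      · apply continuous_pi
        intro j
        simp only [vP]
        split_ifs
        · exact (continuous_apply j).comp continuous_fst
        · exact continuous_snd
    have hP0 : (fun q : (Fin (m+2) → ℝ) × ℝ =>
        ((xiP m q.1 q.2, vP m q.1 q.2) : (Fin (m+2) → ℝ) × (Fin (m+2) → ℝ))) (0, 0) = (0, 0) := by
      have h1 : xiP m (0 : Fin (m+2) → ℝ) 0 = 0 := by funext j; simp [xiP]
      have h2 : vP m (0 : Fin (m+2) → ℝ) 0 = 0 := by funext j; simp [vP]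
      simp [h1, h2]
    have hUn : U ∈ 𝓝 ((fun q : (Fin (m+2) → ℝ) × ℝ =>
        ((xiP m q.1 q.2, vP m q.1 q.2) : (Fin (m+2) → ℝ) × (Fin (m+2) → ℝ))) (0, 0)) := by
      rw [hP0]; exact hU
    have hpre := hcontP.continuousAt.preimage_mem_nhds hUn
    obtain ⟨δ, hδpos, hsub⟩ := Metric.mem_nhds_iff.1 hpre
    refine ⟨δ, hδpos, fun σ v hσ hv => ?_⟩
    have : ((σ, v) : (Fin (m+2) → ℝ) × ℝ) ∈ Metric.ball (0,0) δ := by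
      rw [mem_ball, Prod.dist_eq]
      apply max_lt
      · rwa [dist_zero_right]
      · rwa [Real.dist_eq, sub_zero]
    exact hsub this
  -- derivative of F at p₀
  have hFc : ContDiffAt ℝ (⊤:ℕ∞) F p₀ := hFsm'.contDiffAt (isOpen_ball.mem_nhds hball)
  have hFd : DifferentiableAt ℝ F p₀ := hFc.differentiableAt (by simp)
  set A := fderiv ℝ F p₀ with hAdef
  have hAF : HasFDerivAt F A p₀ := hFd.hasFDerivAt
  have himg : F p₀ ∈ F '' ball p₀ ε₀ := ⟨p₀, hball, rfl⟩
  have hFinvd : DifferentiableAt ℝ Finv (F p₀) :=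
    (hFinvsm.contDiffAt (hFopen.mem_nhds himg)).differentiableAt (by simp)
  have hAinv : ∀ x, fderiv ℝ Finv (F p₀) (A x) = x := by
    have hcomp : HasFDerivAt (Finv ∘ F) ((fderiv ℝ Finv (F p₀)).comp A) p₀ :=
      hFinvd.hasFDerivAt.comp p₀ hAF
    have heq : (Finv ∘ F) =ᶠ[𝓝 p₀] id := by
      filter_upwards [isOpen_ball.mem_nhds hball] with x hx using hFinveq x hx
    have hid : HasFDerivAt (Finv ∘ F) (ContinuousLinearMap.id ℝ (Fin (m+3) → ℝ)) p₀ :=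
      (hasFDerivAt_id p₀).congr_of_eventuallyEq heq
    have huniq := hcomp.unique hid
    intro x
    calc fderiv ℝ Finv (F p₀) (A x) = ((fderiv ℝ Finv (F p₀)).comp A) x := rfl
    _ = ContinuousLinearMap.id ℝ (Fin (m+3) → ℝ) x := by rw [huniq]
    _ = x := rfl
  have hAinj : Function.Injective A := by
    intro x y hxy
    rw [← hAinv x, ← hAinv y, hxy]
  have hAsurj : Function.Surjective A := by
    have h2 := (LinearMap.injective_iff_surjective
      (f := (A : (Fin (m+3) → ℝ) →ₗ[ℝ] (Fin (m+3) → ℝ)))).1 hAinj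
    exact h2
  -- rows of A
  have hα : ∀ (j : Fin (m+3)) (x : Fin (m+3) → ℝ),
      fderiv ℝ (fun y => F y j) p₀ x = A x j := by
    intro j x
    have hproj : HasFDerivAt (fun y => F y j)
        ((ContinuousLinearMap.proj (R := ℝ) (φ := fun _ : Fin (m+3) => ℝ) j).comp A) p₀ :=
      (ContinuousLinearMap.proj (R := ℝ) (φ := fun _ : Fin (m+3) => ℝ) j).hasFDerivAt.comp p₀ hAF
    rw [hproj.fderiv]
    rfl
  set Bm : Fin (m+3) → ((Fin (m+3) → ℝ) →L[ℝ] (Fin (m+3) → ℝ) →L[ℝ] ℝ) :=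
    fun j => fderiv ℝ (fderiv ℝ (fun x => F x j)) p₀ with hBmdef
  have hmaster : ∀ (σ : Fin (m+2) → ℝ) (v : ℝ), ‖σ‖ < δ → |v| < δ →
      ∀ (i : Fin (m+3)), (i:ℕ) < m+2 →
      (Bm i (wvec m σ v) (wvec m σ v) + A (uvec m σ v) i) * (A (wvec m σ v) (LIdx m))
      = (Bm (LIdx m) (wvec m σ v) (wvec m σ v) + A (uvec m σ v) (LIdx m))
        * (A (wvec m σ v) i) := by
    intro σ v hσ hv i hi
    have hM := master (m := m) hε₀ hFsm' hline' σ v (hδU σ v hσ hv) i hi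
    simp only [← hp₀def, hα] at hM
    exact hM
  set a : Fin (m+3) → ℝ := A (ey m) with hadef
  set b : Fin (m+3) → ℝ := A (et m) with hbdef
  by_cases hc : ∀ i : Fin (m+3), a i * b (LIdx m) = a (LIdx m) * b i
  · -- degenerate case: last row kills e_y and e_t directions
    have hz : a (LIdx m) • et m - b (LIdx m) • ey m = 0 := by
      apply hAinj
      rw [map_zero, map_sub, _root_.map_smul, _root_.map_smul]
      funext j
      simp only [Pi.sub_apply, Pi.smul_apply, smul_eq_mul, Pi.zero_apply]
      rw [← hadef, ← hbdef]
      linear_combination - hc j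
    have hLney : LIdx m ≠ yIdx m := by simp [LIdx, yIdx, Fin.ext_iff]
    have haL : a (LIdx m) = 0 := by
      have h1 := congrFun hz (LIdx m)
      simpa [et, ey, Pi.single_eq_same, Pi.single_eq_of_ne hLney] using h1
    have hbL : b (LIdx m) = 0 := by
      have h1 := congrFun hz (yIdx m)
      simpa [et, ey, Pi.single_eq_same, Pi.single_eq_of_ne hLney.symm] using h1
    have hai : ∃ i, a i ≠ 0 := by
      by_contra hnone
      push_neg at hnone
      have hey0 : ey m = 0 := by
        apply hAinj
        rw [map_zero]
        funext j
        exact hnone j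
      have := congrFun hey0 (yIdx m)
      simp [ey, Pi.single_eq_same] at this
    obtain ⟨i, hane⟩ := hai
    have hiL : i ≠ LIdx m := fun h => hane (h ▸ haL)
    have hi : (i:ℕ) < m+2 := by
      have h1 := i.isLt
      have h2 : (i:ℕ) ≠ m+2 := fun h => hiL (Fin.ext (by simp [LIdx, h]))
      omega
    -- choose σ* with A (phat σ*) (LIdx m) ≠ 0
    obtain ⟨x, hx⟩ := hAsurj (Pi.single (LIdx m) 1)
    set σc : Fin (m+2) → ℝ :=
      fun j => if h : (j:ℕ) < m+1 then -(x (⟨(j:ℕ), by omega⟩ : Fin (m+3)))/2 else 0 with hσcdef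
    have hphatσc : ∀ j : Fin (m+3), phat m σc j = if (j:ℕ) < m+1 then x j else 0 := by
      intro j
      simp only [phat, σc]
      rcases lt_or_ge (j:ℕ) (m+1) with h | h
      · rw [dif_pos h, if_pos h, dif_pos h]
        have : (⟨((⟨(j:ℕ), by omega⟩ : Fin (m+2)) : ℕ), by omega⟩ : Fin (m+3)) = j :=
          Fin.ext rfl
        rw [this]
        ring
      · rw [dif_neg (by omega), if_neg (by omega)]
    have hxdec : x = phat m σc + x (yIdx m) • ey m + x (LIdx m) • et m := by
      funext j
      simp only [Pi.add_apply, Pi.smul_apply, smul_eq_mul, ey, et]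
      rw [hphatσc j]
      rcases lt_or_ge (j:ℕ) (m+1) with h | h
      · rw [if_pos h,
          Pi.single_eq_of_ne (fun hh => by rw [hh] at h; simp [yIdx] at h) 1,
          Pi.single_eq_of_ne (fun hh => by rw [hh] at h; simp [LIdx] at h) 1]
        ring
      · rcases lt_or_ge (j:ℕ) (m+2) with h2 | h2
        · have hj : j = yIdx m := Fin.ext (by simp [yIdx]; omega)
          subst hj
          rw [if_neg (by omega), Pi.single_eq_same,
            Pi.single_eq_of_ne hLney.symm 1]
          ring
        · have hj : j = LIdx m := Fin.ext (by simp [LIdx]; omega)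
          subst hj
          rw [if_neg (by omega), Pi.single_eq_same, Pi.single_eq_of_ne hLney 1]
          ring
    have hrowL : A (phat m σc) (LIdx m) = 1 := by
      have h1 : A x (LIdx m) = 1 := by rw [hx]; simp [Pi.single_eq_same]
      rw [hxdec] at h1
      rw [map_add, map_add, _root_.map_smul, _root_.map_smul] at h1
      simp only [Pi.add_apply, Pi.smul_apply, smul_eq_mul] at h1
      rw [← hadef, ← hbdef, haL, hbL] at h1
      linarith
    set ε := δ / (2 * (‖σc‖ + 1)) with hεdef
    have hσcnn : (0:ℝ) ≤ ‖σc‖ := norm_nonneg _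
    have hεpos : 0 < ε := by
      apply div_pos hδpos
      positivity
    have hεσ : ‖ε • σc‖ < δ := by
      have h2 : ε * ‖σc‖ ≤ ε * (‖σc‖ + 1) := by nlinarith
      have h3 : ε * (‖σc‖ + 1) = δ/2 := by
        rw [hεdef]
        field_simp
      rw [norm_smul, Real.norm_eq_abs, abs_of_pos hεpos]
      linarith
    have hrowε : A (phat m (ε • σc)) (LIdx m) = ε := by
      rw [phat_smul, _root_.map_smul]
      simp only [Pi.smul_apply, smul_eq_mul]
      rw [hrowL]
      ring
    -- constants
    set Pv : Fin (m+3) → ℝ := phat m (ε • σc) + et m with hPvdef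
    have hw2 : ∀ v : ℝ, wvec m (ε • σc) v = Pv + phiv v • ey m := by
      intro v
      rw [wvec_eq, hPvdef]
      module
    have hu2 : ∀ v : ℝ, uvec m (ε • σc) v = (Pv - et m) + psiv v • ey m := by
      intro v
      rw [uvec_eq, hPvdef]
      module
    have hAPvL : A Pv (LIdx m) = ε := by
      rw [hPvdef, map_add]
      simp only [Pi.add_apply]
      rw [hrowε, ← hbdef, hbL]
      ring
    refine cubic_impossible' (ε * a i)
      ((Bm (LIdx m) Pv Pv + ε) * (A Pv i) - ε * (Bm i Pv Pv + A Pv i - b i))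
      ((Bm (LIdx m) Pv Pv + ε) * a i
        + (Bm (LIdx m) Pv (ey m) + Bm (LIdx m) (ey m) Pv) * (A Pv i)
        - ε * (Bm i Pv (ey m) + Bm i (ey m) Pv))
      ((Bm (LIdx m) Pv (ey m) + Bm (LIdx m) (ey m) Pv) * a i
        + Bm (LIdx m) (ey m) (ey m) * (A Pv i)
        - ε * Bm i (ey m) (ey m))
      (Bm (LIdx m) (ey m) (ey m) * a i)
      δ hδpos (mul_ne_zero hεpos.ne' hane) ?_
    intro v hv
    have hM := hmaster (ε • σc) v hεσ hv i hi
    rw [hw2 v, hu2 v] at hM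
    rw [bilin_expand, bilin_expand, lin_expand, lin_expand, lin_expand, lin_expand] at hM
    rw [map_sub] at hM
    simp only [Pi.sub_apply] at hM
    rw [← hadef, ← hbdef] at hM
    rw [hAPvL, haL, hbL] at hM
    linear_combination hM
  · -- main case
    push_neg at hc
    obtain ⟨i, hne⟩ := hc
    have hk : a i * b (LIdx m) - a (LIdx m) * b i ≠ 0 := sub_ne_zero_of_ne hne
    have hiL : i ≠ LIdx m := by
      rintro rfl
      exact hne (by ring)
    have hi : (i:ℕ) < m+2 := by
      have h1 := i.isLt
      have h2 : (i:ℕ) ≠ m+2 := fun h => hiL (Fin.ext (by simp [LIdx, h]))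
      omega
    have hw0 : ∀ v : ℝ, wvec m 0 v = et m + phiv v • ey m := by
      intro v
      rw [wvec_eq, phat_zero]
      module
    have hu0 : ∀ v : ℝ, uvec m 0 v = (0:Fin (m+3) → ℝ) + psiv v • ey m := by
      intro v
      rw [uvec_eq, phat_zero]
    refine cubic_impossible' (a i * b (LIdx m) - a (LIdx m) * b i)
      (Bm (LIdx m) (et m) (et m) * b i - Bm i (et m) (et m) * b (LIdx m))
      (Bm (LIdx m) (et m) (et m) * a i
        + (Bm (LIdx m) (et m) (ey m) + Bm (LIdx m) (ey m) (et m)) * b i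
        - Bm i (et m) (et m) * a (LIdx m)
        - (Bm i (et m) (ey m) + Bm i (ey m) (et m)) * b (LIdx m))
      ((Bm (LIdx m) (et m) (ey m) + Bm (LIdx m) (ey m) (et m)) * a i
        + Bm (LIdx m) (ey m) (ey m) * b i
        - (Bm i (et m) (ey m) + Bm i (ey m) (et m)) * a (LIdx m)
        - Bm i (ey m) (ey m) * b (LIdx m))
      (Bm (LIdx m) (ey m) (ey m) * a i - Bm i (ey m) (ey m) * a (LIdx m))
      δ hδpos hk ?_
    intro v hv
    have hM := hmaster 0 v (by simpa using hδpos) hv i hi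
    rw [hw0 v, hu0 v] at hM
    rw [bilin_expand, bilin_expand, lin_expand, lin_expand, lin_expand, lin_expand] at hM
    simp only [map_zero, ContinuousLinearMap.zero_apply, Pi.zero_apply, zero_add] at hM
    rw [← hadef, ← hbdef] at hM
    linear_combination hM
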